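/- The G-rank is invariant under taking powers: for any homogeneous polynomial f ∈ S^d V and any m ≥ 1, r^G_k(f^m) = r^G_k(f), where for g(t) ∈ GL(V)(k[[t]]) one has val_t(g(t)·f^m) = m·val_t(g(t)·f). -/

import Mathlib

/-- The Gauss `t`-adic valuation of a polynomial with coefficients in `k[[t]]`:
the minimum of the `t`-adic valuations of its coefficients. -/
noncomputable def tval {k : Type*} [Field k] {n : ℕ}
    (F : MvPolynomial (Fin n) (PowerSeries k)) : ℕ :=
  sInf {m : ℕ | ∃ d, PowerSeries.coeff (R := k) m (MvPolynomial.coeff d F) ≠ 0}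

/-- The `t`-adic valuation of a power series. -/
noncomputable def psval {k : Type*} [Field k] (p : PowerSeries k) : ℕ :=
  sInf {m : ℕ | PowerSeries.coeff (R := k) m p ≠ 0}

/-- The action of a matrix `g` over `k[[t]]` on polynomials by linear substitution
of the variables. -/
noncomputable def matAct {k : Type*} [Field k] {n : ℕ}
    (g : Matrix (Fin n) (Fin n) (PowerSeries k))
    (F : MvPolynomial (Fin n) (PowerSeries k)) : MvPolynomial (Fin n) (PowerSeries k) :=
  MvPolynomial.aeval (fun i => ∑ j, MvPolynomial.C (g i j) * MvPolynomial.X j) F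

/-- The `G`-rank (`G = GLₙ`) of a (degree `d`) polynomial `F` over `k[[t]]`:
the infimum of `d · val_t(det g) / val_t(g·F)` over matrices `g` over `k[[t]]` with
nonzero determinant such that `val_t(g·F) > 0`. -/
noncomputable def GRank {k : Type*} [Field k] {n : ℕ} (d : ℕ)
    (F : MvPolynomial (Fin n) (PowerSeries k)) : ℝ :=
  sInf {x : ℝ | ∃ g : Matrix (Fin n) (Fin n) (PowerSeries k),
    g.det ≠ 0 ∧ 0 < tval (matAct g F) ∧
    x = (d : ℝ) * (psval g.det : ℝ) / (tval (matAct g F) : ℝ)}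

namespace Aux
open MvPolynomial PowerSeries

variable {k : Type*} [Field k] {n : ℕ}

lemma tval_zero : tval (0 : MvPolynomial (Fin n) (PowerSeries k)) = 0 := by
  simp [tval]

lemma S_nonempty {G : MvPolynomial (Fin n) (PowerSeries k)} (hG : G ≠ 0) :
    {m : ℕ | ∃ d, PowerSeries.coeff (R := k) m (MvPolynomial.coeff d G) ≠ 0}.Nonempty := by
  obtain ⟨d, hd⟩ := MvPolynomial.ne_zero_iff.1 hG
  obtain ⟨m, hm⟩ : ∃ m, PowerSeries.coeff (R := k) m (MvPolynomial.coeff d G) ≠ 0 := by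
    by_contra h
    push_neg at h
    exact hd (PowerSeries.ext h)
  exact ⟨m, d, hm⟩

lemma tval_C_X_pow_mul (a : ℕ) (G₁ : MvPolynomial (Fin n) (PowerSeries k))
    (h : MvPolynomial.map (PowerSeries.constantCoeff (R := k)) G₁ ≠ 0) :
    tval (MvPolynomial.C (PowerSeries.X ^ a) * G₁) = a := by
  obtain ⟨d, hd⟩ := MvPolynomial.ne_zero_iff.1 h
  rw [MvPolynomial.coeff_map] at hd
  have ha : a ∈ {m : ℕ | ∃ e, PowerSeries.coeff (R := k) m
      (MvPolynomial.coeff e (MvPolynomial.C (PowerSeries.X ^ a) * G₁)) ≠ 0} := by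
    refine ⟨d, ?_⟩
    rw [MvPolynomial.coeff_C_mul]
    have := PowerSeries.coeff_X_pow_mul (MvPolynomial.coeff d G₁) a 0
    rw [zero_add] at this
    rw [this, PowerSeries.coeff_zero_eq_constantCoeff]
    exact hd
  refine le_antisymm (Nat.sInf_le ha) (le_csInf ⟨a, ha⟩ ?_)
  rintro m ⟨e, he⟩
  by_contra hlt
  push_neg at hlt
  rw [MvPolynomial.coeff_C_mul, PowerSeries.coeff_X_pow_mul', if_neg (by omega)] at he
  exact he rfl

lemma exists_decomp (G : MvPolynomial (Fin n) (PowerSeries k)) (hG : G ≠ 0) :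
    ∃ G₁, MvPolynomial.map (PowerSeries.constantCoeff (R := k)) G₁ ≠ 0 ∧
      G = MvPolynomial.C (PowerSeries.X ^ tval G) * G₁ := by
  have hmem := Nat.sInf_mem (S_nonempty hG)
  have hdvd : MvPolynomial.C (PowerSeries.X ^ tval G : PowerSeries k) ∣ G := by
    rw [MvPolynomial.C_dvd_iff_dvd_coeff]
    intro i
    rw [PowerSeries.X_pow_dvd_iff]
    intro m hm
    by_contra hne
    have hle : tval G ≤ m := by apply Nat.sInf_le; exact ⟨i, hne⟩
    omega
  obtain ⟨G₁, hG₁⟩ := hdvd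
  refine ⟨G₁, ?_, hG₁⟩
  have hmem' : ∃ d, PowerSeries.coeff (R := k) (tval G) (MvPolynomial.coeff d G) ≠ 0 := hmem
  obtain ⟨d, hd⟩ := hmem'
  have hc : MvPolynomial.coeff d G = PowerSeries.X ^ tval G * MvPolynomial.coeff d G₁ := by
    conv_lhs => rw [hG₁]
    rw [MvPolynomial.coeff_C_mul]
  rw [hc] at hd
  have := PowerSeries.coeff_X_pow_mul (MvPolynomial.coeff d G₁) (tval G) 0
  rw [zero_add] at this
  rw [this, PowerSeries.coeff_zero_eq_constantCoeff] at hd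
  intro hzero
  apply hd
  have := congrArg (MvPolynomial.coeff d) hzero
  rwa [MvPolynomial.coeff_map, MvPolynomial.coeff_zero] at this

lemma tval_mul {G H : MvPolynomial (Fin n) (PowerSeries k)} (hG : G ≠ 0) (hH : H ≠ 0) :
    tval (G * H) = tval G + tval H := by
  obtain ⟨G₁, hG₁ne, hG₁⟩ := exists_decomp G hG
  obtain ⟨H₁, hH₁ne, hH₁⟩ := exists_decomp H hH
  have key : G * H = MvPolynomial.C (PowerSeries.X ^ (tval G + tval H)) * (G₁ * H₁) := by
    conv_lhs => rw [hG₁, hH₁]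
    rw [pow_add, map_mul]; ring
  rw [key, tval_C_X_pow_mul _ _ (by rw [map_mul]; exact mul_ne_zero hG₁ne hH₁ne)]

lemma tval_one : tval (1 : MvPolynomial (Fin n) (PowerSeries k)) = 0 := by
  have := tval_C_X_pow_mul (k := k) (n := n) 0 1 (by simp)
  simpa using this

lemma tval_pow {G : MvPolynomial (Fin n) (PowerSeries k)} (hG : G ≠ 0) (m : ℕ) :
    tval (G ^ m) = m * tval G := by
  induction m with
  | zero => simpa using tval_one
  | succ m ih =>
    rw [pow_succ, tval_mul (pow_ne_zero m hG) hG, ih]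
    ring

end Aux

lemma matAct_pow {k : Type*} [Field k] {n : ℕ}
    (g : Matrix (Fin n) (Fin n) (PowerSeries k))
    (F : MvPolynomial (Fin n) (PowerSeries k)) (m : ℕ) :
    matAct g (F ^ m) = (matAct g F) ^ m := by
  simp [matAct, map_pow]

/-- the `G`-rank is invariant under taking powers: for a nonzero homogeneous
polynomial `f` of degree `d` and `m ≥ 1`, `r^G_k(f^m) = r^G_k(f)` (the key point being
`val_t(g·f^m) = m · val_t(g·f)`). -/
theorem stmt10 {k : Type*} [Field k] {n : ℕ} (d m : ℕ) (hm : 1 ≤ m)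
    (f : MvPolynomial (Fin n) k) (hf : f ≠ 0) (hdeg : f.IsHomogeneous d) :
    GRank (d * m) ((MvPolynomial.map (PowerSeries.C (R := k)) f) ^ m)
      = GRank d (MvPolynomial.map (PowerSeries.C (R := k)) f) := by
  have hm0 : m ≠ 0 := by omega
  have hmR : (m : ℝ) ≠ 0 := Nat.cast_ne_zero.2 hm0
  unfold GRank
  congr 1
  ext x
  simp only [Set.mem_setOf_eq]
  constructor
  · rintro ⟨g, hdet, hpos, hx⟩
    rw [matAct_pow] at hpos hx
    have hne : matAct g (MvPolynomial.map (PowerSeries.C (R := k)) f) ≠ 0 := by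
      intro h
      rw [h, zero_pow hm0, Aux.tval_zero] at hpos
      exact lt_irrefl 0 hpos
    rw [Aux.tval_pow hne m] at hpos hx
    have hw : 0 < tval (matAct g (MvPolynomial.map (PowerSeries.C (R := k)) f)) :=
      Nat.pos_of_ne_zero (fun h => by simp [h] at hpos)
    have hwR : ((tval (matAct g (MvPolynomial.map (PowerSeries.C (R := k)) f))) : ℝ) ≠ 0 :=
      Nat.cast_ne_zero.2 hw.ne'
    refine ⟨g, hdet, hw, ?_⟩
    rw [hx]
    push_cast
    field_simp
  · rintro ⟨g, hdet, hpos, hx⟩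
    have hne : matAct g (MvPolynomial.map (PowerSeries.C (R := k)) f) ≠ 0 := by
      intro h
      rw [h, Aux.tval_zero] at hpos
      exact lt_irrefl 0 hpos
    have hwR : ((tval (matAct g (MvPolynomial.map (PowerSeries.C (R := k)) f))) : ℝ) ≠ 0 :=
      Nat.cast_ne_zero.2 hpos.ne'
    refine ⟨g, hdet, ?_, ?_⟩
    · rw [matAct_pow, Aux.tval_pow hne m]
      exact Nat.mul_pos (by omega) hpos
    · rw [matAct_pow, Aux.tval_pow hne m, hx]
      push_cast
      field_simp
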